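/- For every integer i ≥ 1 one has ℛ_i = ℛ_{i−1}·s·(s−1)² + 𝒫_i/s. -/

import Mathlib

theorem stmt_4 {K : Type*} [Field K] [CharP K 3]
    (s : K) (hs0 : s ≠ 0) (hs1 : s ≠ 1)
    (P Q R : ℕ → K)
    (hP0 : P 0 = 0) (hP1 : P 1 = 1)
    (hQ0 : Q 0 = (s * (s - 1))⁻¹) (hQ1 : Q 1 = s)
    (hR0 : R 0 = -(s ^ 2)⁻¹) (hR1 : R 1 = -(s + 1))
    (hPrec : ∀ j : ℕ, 1 ≤ j → P (j + 1) = -s ^ 3 * P j - (s * (s - 1)) ^ 3 * P (j - 1))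
    (hQrec : ∀ j : ℕ, 1 ≤ j → Q (j + 1) = -s ^ 3 * Q j - (s * (s - 1)) ^ 3 * Q (j - 1))
    (hRrec : ∀ j : ℕ, 1 ≤ j → R (j + 1) = -s ^ 3 * R j - (s * (s - 1)) ^ 3 * R (j - 1)) :
    ∀ i : ℕ, 1 ≤ i → R i = R (i - 1) * s * (s - 1) ^ 2 + P i / s := by
  have h3 : (3 : K) = 0 := CharP.cast_eq_zero K 3
  have key : ∀ j : ℕ, R (j + 1) = R j * s * (s - 1) ^ 2 + P (j + 1) / s := by
    intro j
    induction j using Nat.strong_induction_on with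
    | _ j ih =>
      match j with
      | 0 =>
        rw [hR0, hR1, hP1]
        field_simp
        ring_nf
        linear_combination (-s) * h3
      | 1 =>
        have hR2 := hRrec 1 le_rfl
        have hP2 := hPrec 1 le_rfl
        simp only [Nat.sub_self] at hR2 hP2
        rw [hR2, hP2, hR0, hR1, hP0, hP1]
        field_simp
        ring_nf
        linear_combination (s - s^2 + s^3) * h3
      | (k + 2) =>
        have hR := hRrec (k + 2) (by omega)
        have hP := hPrec (k + 2) (by omega)
        simp only [show k + 2 - 1 = k + 1 from rfl] at hR hP
        have ih1 := ih (k + 1) (by omega)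
        have ih0 := ih k (by omega)
        have hR' := hRrec (k + 1) (by omega)
        simp only [show k + 1 - 1 = k from rfl] at hR'
        linear_combination hR - hP / s - s * (s - 1) ^ 2 * hR' - s ^ 3 * ih1 - (s * (s - 1)) ^ 3 * ih0
  intro i hi
  obtain ⟨n, rfl⟩ : ∃ n, i = n + 1 := ⟨i - 1, by omega⟩
  simpa using key n
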